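/- Let μ(x,y) = ∫₀¹ x^{1−α} y^α dα be the logarithmic mean. For −1 < r < 1, set θ = μ(1−r, 1+r) = r/arctanh(r) (with θ = 1 at r = 0). Then the geometric mean G = √(1−r²) satisfies G ≤ θ/√(2−θ), and also G ≤ θ ≤ 1. -/

import Mathlib

open Real

lemma nonneg_of_deriv (f f' : ℝ → ℝ) (hf : ∀ x, HasDerivAt f (f' x) x)
    (h0 : f 0 = 0) (hd : ∀ x, 0 ≤ x → 0 ≤ f' x) : ∀ x, 0 ≤ x → 0 ≤ f x := by
  intro x hx
  have hmono : MonotoneOn f (Set.Ici 0) := by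
    apply monotoneOn_of_deriv_nonneg (convex_Ici 0)
    · exact fun y _ => (hf y).continuousAt.continuousWithinAt
    · exact fun y _ => (hf y).differentiableAt.differentiableWithinAt
    · intro y hy
      rw [(hf y).deriv]
      exact hd y (le_of_lt (by simpa using hy))
  calc (0:ℝ) = f 0 := h0.symm
  _ ≤ f x := hmono (by simp) (by simpa using hx) hx

lemma sinh_le_mul_cosh {x : ℝ} (hx : 0 ≤ x) : Real.sinh x ≤ x * Real.cosh x := by
  have := nonneg_of_deriv (fun x => x * Real.cosh x - Real.sinh x) (fun x => x * Real.sinh x)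
    (fun y => by
      exact (((hasDerivAt_id y).mul (Real.hasDerivAt_cosh y)).sub (Real.hasDerivAt_sinh y)).congr_deriv (by simp))
    (by simp) (fun y hy => mul_nonneg hy (Real.sinh_nonneg_iff.mpr hy)) x hx
  simp only [sub_nonneg] at this
  linarith

lemma one_add_sq_le_cosh {x : ℝ} (hx : 0 ≤ x) : 1 + x^2/2 ≤ Real.cosh x := by
  have := nonneg_of_deriv (fun x => Real.cosh x - 1 - x^2/2) (fun x => Real.sinh x - x)
    (fun y => by
      have h1 : HasDerivAt (fun x : ℝ => x^2/2) y y := by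
        simpa using (hasDerivAt_pow 2 y).div_const 2
      exact ((Real.hasDerivAt_cosh y).sub_const 1).sub h1)
    (by simp) (fun y hy => by
      show (0:ℝ) ≤ Real.sinh y - y
      rcases eq_or_lt_of_le hy with h | h
      · simp [← h]
      · linarith [Real.self_lt_sinh_iff.mpr h]) x hx
  simp only [sub_nonneg] at this
  linarith

lemma add_cube_le_sinh {x : ℝ} (hx : 0 ≤ x) : x + x^3/6 ≤ Real.sinh x := by
  have := nonneg_of_deriv (fun x => Real.sinh x - x - x^3/6) (fun x => Real.cosh x - 1 - x^2/2)
    (fun y => by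
      have h1 : HasDerivAt (fun x : ℝ => x^3/6) (y^2/2) y := by
        have := (hasDerivAt_pow 3 y).div_const 6
        exact this.congr_deriv (by ring)
      exact ((Real.hasDerivAt_sinh y).sub (hasDerivAt_id y)).sub h1)
    (by simp) (fun y hy => by linarith [one_add_sq_le_cosh hy]) x hx
  simp only [sub_nonneg] at this
  linarith

lemma cube_mul_cosh_le_sinh_cube {x : ℝ} (hx : 0 ≤ x) :
    x^3 * Real.cosh x ≤ Real.sinh x ^ 3 := by
  have := nonneg_of_deriv (fun x => Real.sinh x ^ 3 - x^3 * Real.cosh x)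
    (fun x => 3 * Real.sinh x ^ 2 * Real.cosh x - (3*x^2 * Real.cosh x + x^3 * Real.sinh x))
    (fun y => by
      have h1 : HasDerivAt (fun x : ℝ => Real.sinh x ^ 3) (3 * Real.sinh y ^ 2 * Real.cosh y) y := by
        have := (Real.hasDerivAt_sinh y).pow 3
        exact this.congr_deriv (by ring)
      have h2 : HasDerivAt (fun x : ℝ => x^3 * Real.cosh x)
          (3*y^2 * Real.cosh y + y^3 * Real.sinh y) y := by
        have := (hasDerivAt_pow 3 y).mul (Real.hasDerivAt_cosh y)
        exact this.congr_deriv (by ring)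
      exact h1.sub h2)
    (by simp) (fun y hy => by
      have hs := add_cube_le_sinh hy
      have hc : 1 ≤ Real.cosh y := Real.one_le_cosh y
      have hsc := sinh_le_mul_cosh hy
      have hs0 : 0 ≤ Real.sinh y := Real.sinh_nonneg_iff.mpr hy
      show (0:ℝ) ≤ 3 * Real.sinh y ^ 2 * Real.cosh y - (3*y^2 * Real.cosh y + y^3 * Real.sinh y)
      have hp : (0:ℝ) ≤ y + y^3/6 := by positivity
      have hsq : y^2 + y^4/3 ≤ Real.sinh y ^ 2 := by
        have h2 : y^2 + y^4/3 ≤ (y + y^3/6)^2 := by nlinarith [pow_nonneg hy 6]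
        exact h2.trans (pow_le_pow_left₀ hp hs 2)
      nlinarith [mul_le_mul_of_nonneg_left hsq (by positivity : (0:ℝ) ≤ 3 * Real.cosh y),
        mul_le_mul_of_nonneg_left hsc (pow_nonneg hy 3)]) x hx
  simp only [sub_nonneg] at this
  linarith

/-- The logarithmic mean `μ(x,y) = ∫₀¹ x^{1−α} y^α dα`. -/
noncomputable def logMean (x y : ℝ) : ℝ := ∫ α in (0:ℝ)..1, x ^ (1 - α) * y ^ α


lemma logMean_eq {x y : ℝ} (hx : 0 < x) (hy : 0 < y) (hxy : x ≠ y) :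
    logMean x y = (y - x) / (Real.log y - Real.log x) := by
  set c := Real.log y - Real.log x with hc
  have hcne : c ≠ 0 := by
    intro h
    apply hxy
    have : Real.log x = Real.log y := by rw [hc] at h; linarith
    rw [← Real.exp_log hx, ← Real.exp_log hy, this]
  have key : ∀ α : ℝ, x ^ (1-α) * y ^ α = x * Real.exp (c * α) := by
    intro α
    rw [Real.rpow_def_of_pos hx, Real.rpow_def_of_pos hy, ← Real.exp_add]
    nth_rewrite 2 [← Real.exp_log hx]
    rw [← Real.exp_add]
    congr 1
    rw [hc]; ring
  have hint : (∫ α in (0:ℝ)..1, Real.exp (c * α)) = c⁻¹ * (Real.exp c - 1) := by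
    rw [intervalIntegral.integral_comp_mul_left _ hcne]
    simp [integral_exp]
  unfold logMean
  simp_rw [key]
  rw [intervalIntegral.integral_const_mul, hint]
  have hec : Real.exp c = y / x := by
    rw [hc, Real.exp_sub, Real.exp_log hx, Real.exp_log hy]
  rw [hec]
  field_simp

lemma logMean_formula {r : ℝ} (h0 : -1 < r) (h1 : r < 1) (hne : r ≠ 0) :
    logMean (1-r) (1+r) = 2*r / (Real.log (1+r) - Real.log (1-r)) := by
  rw [logMean_eq (by linarith) (by linarith) (by intro h; apply hne; linarith)]
  congr 1
  ring


lemma theta_bounds {r : ℝ} (h0 : 0 < r) (h1 : r < 1) :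
    0 < 2*r/(Real.log (1+r) - Real.log (1-r)) ∧
    2*r/(Real.log (1+r) - Real.log (1-r)) ≤ 1 ∧
    1 - r^2 ≤ (2*r/(Real.log (1+r) - Real.log (1-r)))^3 := by
  set u := (Real.log (1+r) - Real.log (1-r))/2 with hudef
  have hlog : Real.log (1-r) < Real.log (1+r) :=
    Real.log_lt_log (by linarith) (by linarith)
  have hu : 0 < u := by rw [hudef]; linarith
  have hrw : Real.log (1+r) - Real.log (1-r) = 2*u := by rw [hudef]; ring
  set t := Real.exp u with htdef
  have ht0 : 0 < t := Real.exp_pos u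
  have ht2 : t^2 * (1-r) = 1+r := by
    have : t^2 = Real.exp (2*u) := by
      rw [htdef, ← Real.exp_nat_mul]; norm_num
    rw [this, show 2*u = Real.log (1+r) - Real.log (1-r) from by rw [hudef]; ring,
      Real.exp_sub, Real.exp_log (by linarith : (0:ℝ) < 1+r),
      Real.exp_log (by linarith : (0:ℝ) < 1-r)]
    rw [div_mul_cancel₀]
    linarith
  have hlin : t^2 - 1 = r * (t^2 + 1) := by nlinarith [ht2]
  have hsinh : Real.sinh u = r * Real.cosh u := by
    rw [Real.sinh_eq, Real.cosh_eq, Real.exp_neg, ← htdef]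
    field_simp
    nlinarith [hlin]
  have hcpos : 0 < Real.cosh u := Real.cosh_pos u
  have hc2 : Real.cosh u ^ 2 * (1 - r^2) = 1 := by
    have := Real.cosh_sq_sub_sinh_sq u
    rw [hsinh] at this
    nlinarith [this]
  have hru : r ≤ u := by
    have h := sinh_le_mul_cosh hu.le
    rw [hsinh] at h
    exact le_of_mul_le_mul_right (by linarith) hcpos
  have hcube : (1 - r^2) * u^3 ≤ r^3 := by
    have h := cube_mul_cosh_le_sinh_cube hu.le
    rw [hsinh, mul_pow] at h
    have h2 : u^3 ≤ r^3 * Real.cosh u ^ 2 := by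
      have := le_of_mul_le_mul_right (by nlinarith [h] : u^3 * Real.cosh u ≤ (r^3 * Real.cosh u^2) * Real.cosh u) hcpos
      linarith
    calc (1 - r^2) * u^3 ≤ (1 - r^2) * (r^3 * Real.cosh u ^ 2) := by
          apply mul_le_mul_of_nonneg_left h2 (by nlinarith)
      _ = r^3 * (Real.cosh u ^ 2 * (1 - r^2)) := by ring
      _ = r^3 := by rw [hc2]; ring
  rw [hrw]
  have h2u : (0:ℝ) < 2*u := by linarith
  refine ⟨by positivity, ?_, ?_⟩
  · rw [div_le_one h2u]; linarith
  · rw [div_pow, le_div_iff₀ (by positivity)]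
    nlinarith [hcube]

lemma assemble {x θ : ℝ} (hx : 0 ≤ x) (h0 : 0 < θ) (h1 : θ ≤ 1) (h3 : x ≤ θ^3) :
    Real.sqrt x ≤ θ / Real.sqrt (2-θ) ∧ Real.sqrt x ≤ θ ∧ θ ≤ 1 := by
  have h2 : (0:ℝ) < 2 - θ := by linarith
  have hθ2 : x ≤ θ^2 := h3.trans (by nlinarith)
  have hg2 : Real.sqrt x ≤ θ := by
    calc Real.sqrt x ≤ Real.sqrt (θ^2) := Real.sqrt_le_sqrt hθ2
      _ = θ := Real.sqrt_sq h0.le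
  refine ⟨?_, hg2, h1⟩
  rw [le_div_iff₀ (Real.sqrt_pos.mpr h2), ← Real.sqrt_mul hx]
  calc Real.sqrt (x*(2-θ)) ≤ Real.sqrt (θ^2) := by
        apply Real.sqrt_le_sqrt
        nlinarith [mul_le_mul_of_nonneg_right h3 h2.le, sq_nonneg (θ*(1-θ))]
    _ = θ := Real.sqrt_sq h0.le

/-- For `-1 < r < 1`, with `θ = μ(1−r, 1+r)` the logarithmic mean and
`G = √(1−r²)` the geometric mean, one has `G ≤ θ/√(2−θ)` and `G ≤ θ ≤ 1`. -/
theorem geom_le_logMean_bounds (r : ℝ) (hr : -1 < r) (hr' : r < 1) :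
    Real.sqrt (1 - r ^ 2) ≤ logMean (1 - r) (1 + r) / Real.sqrt (2 - logMean (1 - r) (1 + r)) ∧
    Real.sqrt (1 - r ^ 2) ≤ logMean (1 - r) (1 + r) ∧ logMean (1 - r) (1 + r) ≤ 1 := by
  rcases lt_trichotomy r 0 with hneg | hzero | hpos
  · have h0 : (0:ℝ) < -r := by linarith
    have h1 : -r < 1 := by linarith
    have hform : logMean (1-r) (1+r) = 2*(-r)/(Real.log (1+(-r)) - Real.log (1-(-r))) := by
      rw [logMean_formula hr hr' (by linarith)]
      rw [show (1:ℝ) + -r = 1 - r by ring, show (1:ℝ) - -r = 1 + r by ring,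
        show 2*(-r) = -(2*r) by ring,
        show Real.log (1-r) - Real.log (1+r) = -(Real.log (1+r) - Real.log (1-r)) by ring,
        neg_div_neg_eq]
    obtain ⟨hb0, hb1, hb3⟩ := theta_bounds h0 h1
    rw [hform]
    have hx : (0:ℝ) ≤ 1 - r^2 := by nlinarith
    have h3 : 1 - r^2 ≤ (2*(-r)/(Real.log (1+(-r)) - Real.log (1-(-r))))^3 := by
      have : 1 - r^2 = 1 - (-r)^2 := by ring
      rw [this]; exact hb3
    exact assemble hx hb0 hb1 h3
  · subst hzero
    have : logMean (1-(0:ℝ)) (1+(0:ℝ)) = 1 := by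
      simp [logMean, Real.one_rpow]
    rw [this]
    norm_num [Real.sqrt_one]
  · have hform := logMean_formula hr hr' (by linarith : r ≠ 0)
    obtain ⟨hb0, hb1, hb3⟩ := theta_bounds hpos hr'
    rw [hform]
    exact assemble (by nlinarith) hb0 hb1 hb3
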